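/- Let A be a finite-dimensional left-symmetric algebra with basis {e₁,...,eₙ} and dual basis {e₁*,...,eₙ*} of A*. Equip A ⊕ A* with the semidirect product left-symmetric structure A ⋉_{L*,0} A*, i.e., (x+a*)*(y+b*) = xy + L*(x)b* where ⟨L*(x)b*, z⟩ = -⟨b*, xz⟩. Then r = Σᵢ (eᵢ⊗eᵢ* + eᵢ*⊗eᵢ) ∈ (A⊕A*)⊗(A⊕A*) is a symmetric solution of the S-equation in A ⋉_{L*,0} A*. -/

import Mathlib

open TensorProduct

variable {F : Type*} [Field F] {A : Type*} [AddCommGroup A] [Module F A]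

/-- The semidirect product left-symmetric structure A ⋉_{L*,0} A*:
(x+a*)*(y+b*) = xy + L*(x)b*, where ⟨L*(x)b*, z⟩ = -⟨b*, xz⟩. -/
noncomputable def sdDualProd (mul : A →ₗ[F] A →ₗ[F] A)
    (p q : A × Module.Dual F A) : A × Module.Dual F A :=
  (mul p.1 q.1, -((mul p.1).dualMap q.2))

/-- The tensors of r = Σᵢ (eᵢ ⊗ eᵢ* + eᵢ* ⊗ eᵢ): the k-th first components. -/
noncomputable def rFst {ι : Type*} (e : Module.Basis ι F A) :
    ι ⊕ ι → A × Module.Dual F A :=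
  Sum.elim (fun i => (e i, 0)) (fun i => (0, e.coord i))

/-- The tensors of r = Σᵢ (eᵢ ⊗ eᵢ* + eᵢ* ⊗ eᵢ): the k-th second components. -/
noncomputable def rSnd {ι : Type*} (e : Module.Basis ι F A) :
    ι ⊕ ι → A × Module.Dual F A :=
  Sum.elim (fun i => (0, e.coord i)) (fun i => (e i, 0))

private lemma sum_cyc' {ι M : Type*} [Fintype ι] [AddCommMonoid M] (f : ι → ι → ι → M) :
    ∑ i, ∑ j, ∑ m, f i j m = ∑ i, ∑ j, ∑ m, f m i j := by
  rw [Finset.sum_comm]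
  exact Finset.sum_congr rfl fun _ _ => Finset.sum_comm

private lemma sum_cyc {ι M : Type*} [Fintype ι] [AddCommMonoid M] (f : ι → ι → ι → M) :
    ∑ i, ∑ j, ∑ m, f i j m = ∑ i, ∑ j, ∑ m, f j m i :=
  (sum_cyc' f).trans (sum_cyc' fun i j m => f m i j)

private lemma expandP {ι : Type*} [Fintype ι] (e : Module.Basis ι F A) (x : A) :
    ((x, 0) : A × Module.Dual F A) = ∑ m, e.coord m x • ((e m, 0) : A × Module.Dual F A) := by
  ext
  · simp [Prod.fst_sum, Module.Basis.coord_apply, Module.Basis.sum_repr]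
  · simp [Prod.snd_sum]

private lemma expandQ {ι : Type*} [Fintype ι] (e : Module.Basis ι F A) (φ : Module.Dual F A) :
    ((0, φ) : A × Module.Dual F A) = ∑ m, φ (e m) • ((0, e.coord m) : A × Module.Dual F A) := by
  have h : φ = ∑ m, φ (e m) • e.coord m := by
    refine e.ext fun k => ?_
    simp [Module.Basis.coord_apply, Module.Basis.repr_self, Finsupp.single_apply]
  ext z
  · simp [Prod.fst_sum]
  · conv_lhs => rw [h]
    simp [Prod.snd_sum]

set_option maxHeartbeats 2000000 in
/-- r = Σᵢ (eᵢ⊗eᵢ* + eᵢ*⊗eᵢ) is a symmetric solution of the S-equation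
-r₁₂·r₁₃ + r₁₂·r₂₃ + [r₁₃,r₂₃] = 0 in A ⋉_{L*,0} A* (stated with the term
r₁₂·r₁₃ moved to the right-hand side). -/
theorem S_equation_canonical_solution [FiniteDimensional F A]
    (mul : A →ₗ[F] A →ₗ[F] A)
    (hls : ∀ x y z : A,
      mul (mul x y) z - mul x (mul y z) = mul (mul y x) z - mul y (mul x z))
    (ι : Type*) [Fintype ι] (e : Module.Basis ι F A) :
    (∑ k : ι ⊕ ι, (rFst e k) ⊗ₜ[F] (rSnd e k)
      = ∑ k : ι ⊕ ι, (rSnd e k) ⊗ₜ[F] (rFst e k))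
    ∧ ((∑ k : ι ⊕ ι, ∑ l : ι ⊕ ι,
          (rFst e k) ⊗ₜ[F] ((sdDualProd mul (rSnd e k) (rFst e l)) ⊗ₜ[F] (rSnd e l)))
      + ∑ k : ι ⊕ ι, ∑ l : ι ⊕ ι,
          (rFst e k) ⊗ₜ[F] ((rFst e l) ⊗ₜ[F]
            (sdDualProd mul (rSnd e k) (rSnd e l) - sdDualProd mul (rSnd e l) (rSnd e k)))
      = ∑ k : ι ⊕ ι, ∑ l : ι ⊕ ι,
          (sdDualProd mul (rFst e k) (rFst e l)) ⊗ₜ[F] ((rSnd e k) ⊗ₜ[F] (rSnd e l))) := by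
  constructor
  · simp only [Fintype.sum_sum_type, rFst, rSnd, Sum.elim_inl, Sum.elim_inr]
    exact add_comm _ _
  have key : ∀ (i j : ι) (z : A), e.coord j (mul (e i) z)
      = ∑ m, e.coord m z * e.coord j (mul (e i) (e m)) := by
    intro i j z
    have h : z = ∑ m, e.coord m z • e m := by
      simp [Module.Basis.coord_apply, Module.Basis.sum_repr]
    conv_lhs => rw [h]
    simp only [map_sum, map_smul, smul_eq_mul]
  have hAA : ∀ i j : ι, sdDualProd mul ((e i, 0) : A × Module.Dual F A) ((e j, 0))
      = ∑ m, e.coord m (mul (e i) (e j)) • ((e m, 0) : A × Module.Dual F A) := by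
    intro i j
    have h1 : sdDualProd mul ((e i, 0) : A × Module.Dual F A) ((e j, 0))
        = ((mul (e i) (e j), 0) : A × Module.Dual F A) := by
      unfold sdDualProd
      ext z
      · simp
      · simp
    rw [h1]
    exact expandP e _
  have hAQ : ∀ i j : ι, sdDualProd mul ((e i, 0) : A × Module.Dual F A) (((0:A), e.coord j))
      = ∑ m, (-(e.coord j (mul (e i) (e m)))) • (((0:A), e.coord m) : A × Module.Dual F A) := by
    intro i j
    unfold sdDualProd
    ext z
    · simp [Prod.fst_sum]
    · simp only [Prod.snd_sum]
      show -(e.coord j (mul (e i) z)) = _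
      rw [key i j z]
      simp [Module.Basis.coord_apply, Finset.mul_sum, mul_comm]
  have hQA : ∀ i j : ι, sdDualProd mul (((0:A), e.coord i) : A × Module.Dual F A) ((e j, 0))
      = 0 := by
    intro i j
    unfold sdDualProd
    ext z
    · simp
    · show -((0:Module.Dual F A) ((mul ((0:A))) z)) = (0 : A × Module.Dual F A).2 z
      simp
  have hQQ : ∀ i j : ι, sdDualProd mul (((0:A), e.coord i) : A × Module.Dual F A)
      (((0:A), e.coord j)) = 0 := by
    intro i j
    unfold sdDualProd
    ext z
    · simp
    · show -(e.coord j ((mul ((0:A))) z)) = (0 : A × Module.Dual F A).2 z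
      simp
  have hz1 : ∀ i j : ι, ((0 : A × Module.Dual F A)
        - ∑ m, (-(e.coord i (mul (e j) (e m)))) • (((0:A), e.coord m) : A × Module.Dual F A))
      = ∑ m, (e.coord i (mul (e j) (e m))) • (((0:A), e.coord m) : A × Module.Dual F A) := by
    intro i j
    ext z
    · simp [Prod.fst_sum]
    · simp [Prod.snd_sum, Finset.sum_apply]
  have hz3 : ∀ i j : ι, ((∑ m, e.coord m (mul (e i) (e j)) • ((e m, 0) : A × Module.Dual F A))
        - ∑ m, e.coord m (mul (e j) (e i)) • ((e m, 0) : A × Module.Dual F A))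
      = ∑ m, (e.coord m (mul (e i) (e j)) - e.coord m (mul (e j) (e i)))
          • ((e m, 0) : A × Module.Dual F A) := by
    intro i j
    ext z
    · simp [Prod.fst_sum, sub_smul]
    · simp [Prod.snd_sum, Finset.sum_apply]
  simp only [Fintype.sum_sum_type, rFst, rSnd, Sum.elim_inl, Sum.elim_inr,
    hAA, hAQ, hQA, hQQ, sub_self, sub_zero, hz1, hz3,
    zero_tmul, tmul_zero, Finset.sum_const_zero, add_zero, zero_add,
    sum_tmul, tmul_sum, ← smul_tmul', tmul_smul, Finset.sum_add_distrib]
  have K1 : (∑ x : ι, ∑ x_1 : ι, ∑ x_2 : ι, e.coord x_2 (mul (e x) (e x_1)) • ((((0:A), e.coord x) : A × Module.Dual F A) ⊗ₜ[F] ((((e x_2 : A), (0:Module.Dual F A)) : A × Module.Dual F A) ⊗ₜ[F] (((0:A), e.coord x_1) : A × Module.Dual F A)))) + (∑ x : ι, ∑ x_1 : ι, ∑ x_2 : ι, (-(e.coord x_1 (mul (e x) (e x_2)))) • ((((0:A), e.coord x) : A × Module.Dual F A) ⊗ₜ[F] ((((e x_1 : A), (0:Module.Dual F A)) : A × Module.Dual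 F A) ⊗ₜ[F] (((0:A), e.coord x_2) : A × Module.Dual F A)))) = 0 := by
    have hsw : (∑ x : ι, ∑ x_1 : ι, ∑ x_2 : ι, (-(e.coord x_1 (mul (e x) (e x_2)))) • ((((0:A), e.coord x) : A × Module.Dual F A) ⊗ₜ[F] ((((e x_1 : A), (0:Module.Dual F A)) : A × Module.Dual F A) ⊗ₜ[F] (((0:A), e.coord x_2) : A × Module.Dual F A)))) = (∑ x : ι, ∑ x_1 : ι, ∑ x_2 : ι, (-(e.coord x_2 (mul (e x) (e x_1)))) • ((((0:A), e.coord x) : A × Module.Dual F A) ⊗ₜ[F] ((((e x_2 : A), (0:Module.Dual F A)) : A × Module.Dual F A) ⊗ₜ[F] (((0:A), e.coord x_1) : A × Module.Dual F A)))) :=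
      Finset.sum_congr rfl fun x _ => Finset.sum_comm
    rw [hsw]
    simp only [← Finset.sum_add_distrib, ← add_smul, add_neg_cancel, zero_smul,
      Finset.sum_const_zero]
  have K2 : (∑ x : ι, ∑ x_1 : ι, ∑ x_2 : ι, (-(e.coord x_1 (mul (e x) (e x_2)))) • ((((0:A), e.coord x) : A × Module.Dual F A) ⊗ₜ[F] ((((0:A), e.coord x_2) : A × Module.Dual F A) ⊗ₜ[F] (((e x_1 : A), (0:Module.Dual F A)) : A × Module.Dual F A)))) + (∑ x : ι, ∑ x_1 : ι, ∑ x_2 : ι, (e.coord x_2 (mul (e x) (e x_1)) - e.coord x_2 (mul (e x_1) (e x))) • ((((0:A), e.coord x) : A × Module.Dual F A) ⊗ₜ[F] ((((0:A), e.coord x_1) : A × Module.Dual F A) ⊗ₜ[F] (((e x_2 : A), (0:Module.Dual F A)) : A × Module.Dual F A)))) = (∑ x : ι, ∑ x_1 : ι, ∑ x_2 : ι, (-(e.coord x_1 (mul (e x) (e x_2)))) • ((((0:A), e.coord x_2) : A × Module.Dual F A) ⊗ₜ[F] ((((0:A), e.coord x) : A × Module.Dual F A) ⊗ₜ[F] (((e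 x_1 : A), (0:Module.Dual F A)) : A × Module.Dual F A)))) := by
    have hsw : (∑ x : ι, ∑ x_1 : ι, ∑ x_2 : ι, (-(e.coord x_1 (mul (e x) (e x_2)))) • ((((0:A), e.coord x) : A × Module.Dual F A) ⊗ₜ[F] ((((0:A), e.coord x_2) : A × Module.Dual F A) ⊗ₜ[F] (((e x_1 : A), (0:Module.Dual F A)) : A × Module.Dual F A)))) = (∑ x : ι, ∑ x_1 : ι, ∑ x_2 : ι, (-(e.coord x_2 (mul (e x) (e x_1)))) • ((((0:A), e.coord x) : A × Module.Dual F A) ⊗ₜ[F] ((((0:A), e.coord x_1) : A × Module.Dual F A) ⊗ₜ[F] (((e x_2 : A), (0:Module.Dual F A)) : A × Module.Dual F A)))) :=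
      Finset.sum_congr rfl fun x _ => Finset.sum_comm
    rw [hsw]
    have hmerge : (∑ x : ι, ∑ x_1 : ι, ∑ x_2 : ι, (-(e.coord x_2 (mul (e x) (e x_1)))) • ((((0:A), e.coord x) : A × Module.Dual F A) ⊗ₜ[F] ((((0:A), e.coord x_1) : A × Module.Dual F A) ⊗ₜ[F] (((e x_2 : A), (0:Module.Dual F A)) : A × Module.Dual F A)))) + (∑ x : ι, ∑ x_1 : ι, ∑ x_2 : ι, (e.coord x_2 (mul (e x) (e x_1)) - e.coord x_2 (mul (e x_1) (e x))) • ((((0:A), e.coord x) : A × Module.Dual F A) ⊗ₜ[F] ((((0:A), e.coord x_1) : A × Module.Dual F A) ⊗ₜ[F] (((e x_2 : A), (0:Module.Dual F A)) : A × Module.Dual F A)))) = (∑ x : ι, ∑ x_1 : ι, ∑ x_2 : ι, (-(e.coord x_2 (mul (e x_1) (e x)))) • ((((0:A), e.coord x) : A × Module.Dual F A) ⊗ₜ[F] ((((0:A), e.coord x_1) : A × Module.Dual F A) ⊗ₜ[F] (((e x_2 : A), (0:Module.Dual F A)) : A × Module.Dual F A)))) := by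
      simp only [← Finset.sum_add_distrib, ← add_smul]
      refine Finset.sum_congr rfl fun x _ => Finset.sum_congr rfl fun x1 _ =>
        Finset.sum_congr rfl fun x2 _ => ?_
      congr 1
      ring
    rw [hmerge]
    exact (sum_cyc fun i j m => (-(e.coord j (mul (e i) (e m)))) •
      ((((0:A), e.coord m) : A × Module.Dual F A) ⊗ₜ[F] ((((0:A), e.coord i) : A × Module.Dual F A) ⊗ₜ[F] (((e j : A), (0:Module.Dual F A)) : A × Module.Dual F A)))).symm
  have K3 : (∑ x : ι, ∑ x_1 : ι, ∑ x_2 : ι, e.coord x (mul (e x_1) (e x_2)) • ((((e x : A), (0:Module.Dual F A)) : A × Module.Dual F A) ⊗ₜ[F] ((((0:A), e.coord x_1) : A × Module.Dual F A) ⊗ₜ[F] (((0:A), e.coord x_2) : A × Module.Dual F A)))) = (∑ x : ι, ∑ x_1 : ι, ∑ x_2 : ι, e.coord x_2 (mul (e x) (e x_1)) • ((((e x_2 : A), (0:Module.Dual F A)) : A × Module.Dual F A) ⊗ₜ[F] ((((0:A), e.coord x) : A × Module.Dual F A) ⊗ₜ[F] (((0:A), e.coord x_1) : A × Module.Dual F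 A)))) :=
    (sum_cyc fun i j m => (e.coord m (mul (e i) (e j))) •
      ((((e m : A), (0:Module.Dual F A)) : A × Module.Dual F A) ⊗ₜ[F] ((((0:A), e.coord i) : A × Module.Dual F A) ⊗ₜ[F] (((0:A), e.coord j) : A × Module.Dual F A)))).symm
  set S1 := (∑ x : ι, ∑ x_1 : ι, ∑ x_2 : ι, e.coord x_2 (mul (e x) (e x_1)) • ((((0:A), e.coord x) : A × Module.Dual F A) ⊗ₜ[F] ((((e x_2 : A), (0:Module.Dual F A)) : A × Module.Dual F A) ⊗ₜ[F] (((0:A), e.coord x_1) : A × Module.Dual F A)))) with hS1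
  set S2 := (∑ x : ι, ∑ x_1 : ι, ∑ x_2 : ι, (-(e.coord x_1 (mul (e x) (e x_2)))) • ((((0:A), e.coord x) : A × Module.Dual F A) ⊗ₜ[F] ((((0:A), e.coord x_2) : A × Module.Dual F A) ⊗ₜ[F] (((e x_1 : A), (0:Module.Dual F A)) : A × Module.Dual F A)))) with hS2
  set S3 := (∑ x : ι, ∑ x_1 : ι, ∑ x_2 : ι, e.coord x (mul (e x_1) (e x_2)) • ((((e x : A), (0:Module.Dual F A)) : A × Module.Dual F A) ⊗ₜ[F] ((((0:A), e.coord x_1) : A × Module.Dual F A) ⊗ₜ[F] (((0:A), e.coord x_2) : A × Module.Dual F A)))) with hS3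
  set S4 := (∑ x : ι, ∑ x_1 : ι, ∑ x_2 : ι, (-(e.coord x_1 (mul (e x) (e x_2)))) • ((((0:A), e.coord x) : A × Module.Dual F A) ⊗ₜ[F] ((((e x_1 : A), (0:Module.Dual F A)) : A × Module.Dual F A) ⊗ₜ[F] (((0:A), e.coord x_2) : A × Module.Dual F A)))) with hS4
  set S5 := (∑ x : ι, ∑ x_1 : ι, ∑ x_2 : ι, (e.coord x_2 (mul (e x) (e x_1)) - e.coord x_2 (mul (e x_1) (e x))) • ((((0:A), e.coord x) : A × Module.Dual F A) ⊗ₜ[F] ((((0:A), e.coord x_1) : A × Module.Dual F A) ⊗ₜ[F] (((e x_2 : A), (0:Module.Dual F A)) : A × Module.Dual F A)))) with hS5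
  set T1 := (∑ x : ι, ∑ x_1 : ι, ∑ x_2 : ι, e.coord x_2 (mul (e x) (e x_1)) • ((((e x_2 : A), (0:Module.Dual F A)) : A × Module.Dual F A) ⊗ₜ[F] ((((0:A), e.coord x) : A × Module.Dual F A) ⊗ₜ[F] (((0:A), e.coord x_1) : A × Module.Dual F A)))) with hT1
  set T2 := (∑ x : ι, ∑ x_1 : ι, ∑ x_2 : ι, (-(e.coord x_1 (mul (e x) (e x_2)))) • ((((0:A), e.coord x_2) : A × Module.Dual F A) ⊗ₜ[F] ((((0:A), e.coord x) : A × Module.Dual F A) ⊗ₜ[F] (((e x_1 : A), (0:Module.Dual F A)) : A × Module.Dual F A)))) with hT2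
  calc S1 + S2 + (S4 + (S3 + S5)) = (S1 + S4) + ((S2 + S5) + S3) := by abel
    _ = 0 + (T2 + T1) := by rw [K1, K2, K3]
    _ = T1 + T2 := by abel
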